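/- Let Φ(z) = (1/2)·[[z(1+z), z²(1−z)],[1−z, z(1+z)]]. Then Φ(z)Φ(z)* = I₂ for all z on the unit circle, and det(wI₂ − Φ(z)) = (w−z)(w−z²) for all complex z, w. -/

import Mathlib

theorem determinantal_representation_example
    (Φ : ℂ → Matrix (Fin 2) (Fin 2) ℂ)
    (hΦ : ∀ z : ℂ, Φ z = (1/2 : ℂ) •
      Matrix.of ![![z * (1 + z), z ^ 2 * (1 - z)], ![1 - z, z * (1 + z)]]) :
    (∀ z : ℂ, ‖z‖ = 1 → Φ z * (Φ z).conjTranspose = 1) ∧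
    (∀ z w : ℂ, (w • (1 : Matrix (Fin 2) (Fin 2) ℂ) - Φ z).det = (w - z) * (w - z ^ 2)) := by
  constructor
  · intro z hz
    have h1 : z * (starRingEnd ℂ) z = 1 := by
      rw [Complex.mul_conj]
      norm_cast
      rw [← Complex.sq_norm, hz]; norm_num
    set u := (starRingEnd ℂ) z with hu
    rw [hΦ]
    ext i j
    fin_cases i <;> fin_cases j <;>
      simp [Matrix.mul_apply, Fin.sum_univ_succ, Matrix.conjTranspose_apply,
        Matrix.one_apply, map_mul, map_sub, map_add, map_pow, map_ofNat, ← hu]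
    · linear_combination (((z*u)^2 + 3*(z*u) + 4 - (z+u)*(z*u))/4) * h1
    · linear_combination ((z*u - z*(z*u+1) - z^2)/4) * h1
    · linear_combination ((z*u - u*(z*u+1) - u^2)/4) * h1
    · linear_combination ((z*u + 3 + z + u)/4) * h1
  · intro z w
    rw [hΦ, Matrix.det_fin_two]
    simp [Matrix.smul_apply, Matrix.one_apply]
    ring
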